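/- Let alpha be an assembly in an FTAM system T, let c be a valid configuration of alpha and let c' be its chiral configuration. Then every frontier location f of alpha in configuration c has a corresponding frontier location f' of alpha in configuration c' (with the same tile type), such that attaching the tile at f to alpha in configuration c produces the same assembly as attaching the tile at f' to alpha in configuration c', with the two resulting configurations being chiral to each other. -/

import Mathlib

/-!
A formalization of the Flexible Tile Assembly Model (FTAM).

Tiles are unit squares placed on coplanar lattice points of `ℤ³`; each of the four
sides (N, E, S, W) carries a glue (an optional label with a complementation mark,
a strength, and a flexibility flag).  Assemblies are graphs of tiles with bonds;
configurations assign an orientation (Up / Down / Straight) to every bond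
(rigid bonds are forced Straight); a configuration is valid when it can be realized
by an embedding of the tiles into `ℤ³` without overlaps, without bonding through the
same space, and realizing every bond geometrically (which in particular rules out
contradicting bond loops).
-/

set_option synthInstance.maxSize 2048

namespace FTAM

/-- Integer vectors in `ℤ³`. -/
abbrev Vec3 := Fin 3 → ℤ

/-- The unit vector along axis `i`. -/
def unitVec (i : Fin 3) : Vec3 := fun j => if j = i then 1 else 0

/-- Cross product on `ℤ³`. -/
def cross (u v : Vec3) : Vec3 := fun i => u (i + 1) * v (i + 2) - u (i + 2) * v (i + 1)

/-- A coordinate direction: an axis together with a sign (`true` = positive). -/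
abbrev Dir := Fin 3 × Bool

/-- The vector of a direction. -/
def dirVec (d : Dir) : Vec3 := fun j => (if d.2 then 1 else -1) * unitVec d.1 j

/-- Sides of a tile: `0` = N, `1` = E, `2` = S, `3` = W. -/
abbrev Side := Fin 4

/-- Orientations of a bond: `0` = Up, `1` = Down, `2` = Straight. -/
abbrev Orientation := Fin 3

def Orientation.up : Orientation := 0
def Orientation.down : Orientation := 1
def Orientation.straight : Orientation := 2

/-- Inversion of an orientation: swaps Up and Down, fixes Straight. -/
def invertOr (o : Orientation) : Orientation := if o = 0 then 1 else if o = 1 then 0 else 2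

/-- A glue: an optional label (a base label together with a `Bool` marking the starred
complement; `none` is the null glue), a strength and a flexibility flag
(`true` = flexible). -/
abbrev Glue := Option (ℕ × Bool) × ℕ × Bool

def glueStrength (g : Glue) : ℕ := g.2.1
def glueFlexible (g : Glue) : Bool := g.2.2

/-- Two glues can bind: complementary labels, equal strengths, equal flexibility. -/
def gluesMatch (g g' : Glue) : Prop :=
  (∃ a b, g.1 = some (a, b) ∧ g'.1 = some (a, !b)) ∧ g.2.1 = g'.2.1 ∧ g.2.2 = g'.2.2

/-- A tile type: the glues on its N, E, S and W sides. -/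
abbrev TileType := Glue × Glue × Glue × Glue

def tileGlue (t : TileType) (s : Side) : Glue :=
  if s = 0 then t.1 else if s = 1 then t.2.1 else if s = 2 then t.2.2.1 else t.2.2.2

/-- A bond: an unordered pair of (tile index, side) pairs, recorded as a pair. -/
abbrev BondSpec := (ℕ × Side) × (ℕ × Side)

/-- An assembly: the list of its tiles (given by their tile types) together with the
list of its bonds. -/
abbrev Assembly := List TileType × List BondSpec

/-- A configuration: an orientation for each bond (in the order of the bond list). -/
abbrev Configuration := List Orientation

/-- A placement of a tile: its location (minimal corner), the normal direction of its
plane, and the direction its N side points to. -/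
abbrev Placement := Vec3 × Dir × Dir

/-- An embedding: a placement for each tile (in the order of the tile list). -/
abbrev Embedding := List Placement

/-- The glue sitting on side `x.2` of tile `x.1` of the assembly. -/
def glueAt (α : Assembly) (x : ℕ × Side) : Glue := tileGlue (α.1.getD x.1 default) x.2

/-- The chiral configuration: swap Up and Down on every bond, keep Straight. -/
def chiralCfg (c : Configuration) : Configuration := c.map invertOr

def normalAxis (p : Placement) : Fin 3 := p.2.1.1

def normalVec (p : Placement) : Vec3 := dirVec p.2.1

/-- Twice the center of a placed tile. -/
def center2 (p : Placement) : Vec3 :=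
  (2 : ℤ) • p.1 + unitVec (normalAxis p + 1) + unitVec (normalAxis p + 2)

/-- The in-plane direction from the center of a placed tile towards the side `s`. -/
def sideDir (p : Placement) (s : Side) : Vec3 :=
  if s = 0 then dirVec p.2.2
  else if s = 1 then cross (dirVec p.2.2) (normalVec p)
  else if s = 2 then -dirVec p.2.2
  else -cross (dirVec p.2.2) (normalVec p)

/-- Twice the midpoint of side `s` of a placed tile. -/
def sideMid (p : Placement) (s : Side) : Vec3 := center2 p + sideDir p s

/-- The direction along which side `s` of a placed tile runs. -/
def sideAxis (p : Placement) (s : Side) : Vec3 := cross (sideDir p s) (normalVec p)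

/-- Well-formedness of a placement: the orientation is perpendicular to the normal. -/
def PlacementOK (p : Placement) : Prop := p.2.1.1 ≠ p.2.2.1

/-- Two sides of two placed tiles are adjacent (they occupy the same unit segment). -/
def sidesAdjacent (p : Placement) (s : Side) (p' : Placement) (s' : Side) : Prop :=
  sideMid p s = sideMid p' s' ∧
    (sideAxis p s = sideAxis p' s' ∨ sideAxis p s = -sideAxis p' s')

/-- Geometric realization of a bond between side `s` of a tile placed at `p` and side
`s'` of a tile placed at `p'`, in relative orientation `θ`: the sides are adjacent and
the normals are Straight (equal), or meet in front (Up), or meet behind (Down). -/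
def orientedBond (p : Placement) (s : Side) (p' : Placement) (s' : Side)
    (θ : Orientation) : Prop :=
  sidesAdjacent p s p' s' ∧
    (if θ = Orientation.straight then normalVec p = normalVec p'
     else if θ = Orientation.up then
       ∃ t t' : ℤ, 0 < t ∧ 0 < t' ∧
         center2 p + t • normalVec p = center2 p' + t' • normalVec p'
     else
       ∃ t t' : ℤ, 0 < t ∧ 0 < t' ∧
         center2 p - t • normalVec p = center2 p' - t' • normalVec p')

/-- Two placements overlap if they occupy the same tile location. -/
def overlap (p p' : Placement) : Prop := p.1 = p'.1 ∧ normalAxis p = normalAxis p'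

/-- Structural well-formedness of an assembly: bonds join existing tiles, each tile
side takes part in at most one bond, and bound glues are complementary with equal
strengths and equal flexibility flags. -/
def AssemblyWF (α : Assembly) : Prop :=
  (∀ b ∈ α.2, b.1.1 < α.1.length ∧ b.2.1 < α.1.length) ∧
  (α.2.flatMap fun b => [b.1, b.2]).Nodup ∧
  ∀ b ∈ α.2, gluesMatch (glueAt α b.1) (glueAt α b.2)

/-- `e` is an embedding of the assembly `α` realizing the configuration `c`: tiles are
placed without overlaps, every bond is realized geometrically in its prescribed
orientation (so there are no contradicting bond loops), rigid bonds are Straight, and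
no two pairs of coplanar tiles bind through the same space. -/
def Realizes (α : Assembly) (c : Configuration) (e : Embedding) : Prop :=
  AssemblyWF α ∧ e.length = α.1.length ∧ c.length = α.2.length ∧
  (∀ p ∈ e, PlacementOK p) ∧
  (∀ i j, i < e.length → j < e.length → i ≠ j →
    ¬ overlap (e.getD i default) (e.getD j default)) ∧
  (∀ k, k < α.2.length →
    orientedBond (e.getD (α.2.getD k default).1.1 default) (α.2.getD k default).1.2
      (e.getD (α.2.getD k default).2.1 default) (α.2.getD k default).2.2
      (c.getD k Orientation.straight)) ∧
  (∀ k, k < α.2.length → glueFlexible (glueAt α (α.2.getD k default).1) = false →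
    c.getD k Orientation.straight = Orientation.straight) ∧
  (∀ k k', k < α.2.length → k' < α.2.length → k ≠ k' →
    c.getD k Orientation.straight = Orientation.straight →
    c.getD k' Orientation.straight = Orientation.straight →
    sideMid (e.getD (α.2.getD k default).1.1 default) (α.2.getD k default).1.2 ≠
      sideMid (e.getD (α.2.getD k' default).1.1 default) (α.2.getD k' default).1.2)

/-- A configuration is valid if some embedding realizes it. -/
def ValidConfig (α : Assembly) (c : Configuration) : Prop := ∃ e, Realizes α c e

/-- An assembly is rigid if it has a valid configuration and any two valid
configurations are equal or chiral to each other (so it has exactly one valid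
configuration, or exactly two which are chiral versions of each other). -/
def Rigid (α : Assembly) : Prop :=
  (∃ c, ValidConfig α c) ∧
    ∀ c c', ValidConfig α c → ValidConfig α c' → c' = c ∨ c' = chiralCfg c

/-- An assembly is flexible if it is not rigid. -/
def Flexible (α : Assembly) : Prop := ¬ Rigid α

/-- An FTAM system: a finite tile set, a seed assembly, and a temperature. -/
abbrev FTAMSystem := List TileType × Assembly × ℕ

/-- An attachment of one side of a new tile:
(side of the new tile, index of an existing tile, its side, bond orientation). -/
abbrev Attachment := Side × ℕ × Side × Orientation

/-- A frontier location: a tile type together with the attachments it binds by. -/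
abbrev FrontierLoc := TileType × List Attachment

/-- The chiral version of a frontier location: invert all bond orientations. -/
def chiralFrontier (f : FrontierLoc) : FrontierLoc :=
  (f.1, f.2.map fun a => (a.1, a.2.1, a.2.2.1, invertOr a.2.2.2))

/-- `f` is a frontier location of assembly `α` in valid configuration `c`, for system
`S`: a tile of type `f.1 ∈ S.1` can be placed, in some embedding realizing `c`, without
overlap, binding via the attachments `f.2` (matching glues, rigid glues Straight,
geometrically realized) with total strength at least the temperature `S.2.2`. -/
def IsFrontier (S : FTAMSystem) (α : Assembly) (c : Configuration) (f : FrontierLoc) :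
    Prop :=
  f.1 ∈ S.1 ∧ f.2 ≠ [] ∧ (f.2.map Prod.fst).Nodup ∧
  (∀ a ∈ f.2, a.2.1 < α.1.length) ∧
  S.2.2 ≤ (f.2.map fun a => glueStrength (tileGlue f.1 a.1)).sum ∧
  ∃ e p, Realizes α c e ∧ PlacementOK p ∧ (∀ q ∈ e, ¬ overlap p q) ∧
    ∀ a ∈ f.2,
      gluesMatch (tileGlue f.1 a.1) (glueAt α (a.2.1, a.2.2.1)) ∧
      (glueFlexible (tileGlue f.1 a.1) = false → a.2.2.2 = Orientation.straight) ∧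
      orientedBond p a.1 (e.getD a.2.1 default) a.2.2.1 a.2.2.2

/-- The assembly obtained by attaching a tile at frontier location `f`. -/
def attachAsm (α : Assembly) (f : FrontierLoc) : Assembly :=
  (α.1 ++ [f.1], α.2 ++ f.2.map fun a => ((α.1.length, a.1), (a.2.1, a.2.2.1)))

/-- The configuration obtained by extending `c` with the orientations of the new bonds. -/
def attachCfg (c : Configuration) (f : FrontierLoc) : Configuration :=
  c ++ f.2.map fun a => a.2.2.2

/-- The bond list `N` can be added to `α` while keeping some valid configuration. -/
def ExtendsBonds (α : Assembly) (N : List BondSpec) : Prop :=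
  ∃ c, ValidConfig (α.1, α.2 ++ N) c

/-- One step of the assembly process: attach a tile of some type of the system at a
frontier location of some valid configuration, then form a maximum number of
additional new bonds in a bond-maximizing valid configuration. -/
def Step (S : FTAMSystem) (α α'' : Assembly) : Prop :=
  ∃ c f, ValidConfig α c ∧ IsFrontier S α c f ∧
    ∃ N, ExtendsBonds (attachAsm α f) N ∧
      (∀ N', ExtendsBonds (attachAsm α f) N' → N'.length ≤ N.length) ∧
      α'' = ((attachAsm α f).1, (attachAsm α f).2 ++ N)

/-- Producible assemblies of an FTAM system. -/
inductive Producible (S : FTAMSystem) : Assembly → Prop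
  | seed : Producible S S.2.1
  | step {α α' : Assembly} : Producible S α → Step S α α' → Producible S α'

/-- An assembly is terminal if no valid configuration admits a frontier location. -/
def Terminal (S : FTAMSystem) (α : Assembly) : Prop :=
  ∀ c, ValidConfig α c → ∀ f, ¬ IsFrontier S α c f

/-- A terminal assembly of the system: producible and terminal. -/
def TerminalAsm (S : FTAMSystem) (α : Assembly) : Prop := Producible S α ∧ Terminal S α

/-! ### Rigid components, faces -/

/-- The restriction of a configuration to the bonds lying inside a set `R` of tiles. -/
def restrictCfg (α : Assembly) (R : Finset ℕ) (c : Configuration) : Configuration :=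
  ((α.2.zip c).filter fun bc => decide (bc.1.1.1 ∈ R ∧ bc.1.2.1 ∈ R)).map Prod.snd

/-- `R` is a rigid component of `α`: the subassembly on `R` cannot reconfigure except
by inversion into its chiral configuration. -/
def RigidComponent (α : Assembly) (R : Finset ℕ) : Prop :=
  (∀ i ∈ R, i < α.1.length) ∧
    ∀ c c', ValidConfig α c → ValidConfig α c' →
      restrictCfg α R c' = restrictCfg α R c ∨
        restrictCfg α R c' = chiralCfg (restrictCfg α R c)

/-- Tiles `i` and `j` are joined by a rigid bond of `α`. -/
def rigidBondBetween (α : Assembly) (i j : ℕ) : Prop :=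
  ∃ b ∈ α.2, ((b.1.1 = i ∧ b.2.1 = j) ∨ (b.1.1 = j ∧ b.2.1 = i)) ∧
    glueFlexible (glueAt α b.1) = false

/-- A face of an assembly: a maximal nonempty set of tiles all connected to each other
through rigid bonds (hence coplanar in every embedding). -/
def IsFace (α : Assembly) (F : Finset ℕ) : Prop :=
  F.Nonempty ∧ (∀ i ∈ F, i < α.1.length) ∧
  (∀ i ∈ F, ∀ j ∈ F,
    Relation.ReflTransGen (fun a b => rigidBondBetween α a b ∧ a ∈ F ∧ b ∈ F) i j) ∧
  ∀ i ∈ F, ∀ j, rigidBondBetween α i j → j ∈ F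

/-- Two placements are coplanar: same normal axis and same plane offset. -/
def coplanar (p p' : Placement) : Prop :=
  normalAxis p = normalAxis p' ∧ p.1 (normalAxis p) = p'.1 (normalAxis p)

/-! ### Shapes, congruence, polycubes and outlines -/

/-- A tile location: a minimal corner together with the axis normal to its plane. -/
abbrev TileLoc := Vec3 × Fin 3

/-- The shape of an embedding: the set of tile locations it occupies. -/
def shapeOf (e : Embedding) : Set TileLoc := {la | ∃ p ∈ e, la = (p.1, normalAxis p)}

/-- A signed permutation of the coordinates of `ℤ³` (an element of the hyperoctahedral
group `O(3, ℤ)`). -/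
structure SignedPerm where
  perm : Equiv.Perm (Fin 3)
  sgn : Fin 3 → Bool

/-- Action of a signed permutation on a vector. -/
def SignedPerm.act (g : SignedPerm) (v : Vec3) : Vec3 :=
  fun i => (if g.sgn i then -1 else 1) * v (g.perm.symm i)

/-- Determinant of a signed permutation. -/
def SignedPerm.det (g : SignedPerm) : ℤ :=
  ((Equiv.Perm.sign g.perm : ℤˣ) : ℤ) * ∏ i, (if g.sgn i then (-1 : ℤ) else 1)

/-- Trace of a signed permutation. -/
def SignedPerm.trace (g : SignedPerm) : ℤ :=
  ∑ i, if g.perm i = i then (if g.sgn i then (-1 : ℤ) else 1) else 0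

/-- The opposite corner of the tile at location `la` across its diagonal. -/
def tileDiag (la : TileLoc) : Vec3 := la.1 + unitVec (la.2 + 1) + unitVec (la.2 + 2)

/-- The image of a tile location under the rigid motion `v ↦ g.act v + t`. -/
def mapTile (g : SignedPerm) (t : Vec3) (la : TileLoc) : TileLoc :=
  (fun i => min (g.act la.1 i + t i) (g.act (tileDiag la) i + t i), g.perm la.2)

/-- Two shapes are congruent: one is carried to the other by a rotation (a signed
permutation of determinant `1`) followed by a translation. -/
def CongruentShapes (s s' : Set TileLoc) : Prop :=
  ∃ g t, SignedPerm.det g = 1 ∧ (mapTile g t) '' s = s'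

/-- Face-adjacency of unit cubes (given by their minimal corners). -/
def cubeAdj (a b : Vec3) : Prop := ∃ i, b = a + unitVec i ∨ a = b + unitVec i

/-- A polycube: a nonempty finite face-connected set of unit cubes. -/
def IsPolycube (P : Finset Vec3) : Prop :=
  P.Nonempty ∧ ∀ a ∈ P, ∀ b ∈ P,
    Relation.ReflTransGen (fun x y => cubeAdj x y ∧ x ∈ P ∧ y ∈ P) a b

/-- The outline of a polycube: the tile locations on its outer surface (squares with
exactly one of the two adjacent cubes in the polycube). -/
def outline (P : Finset Vec3) : Set TileLoc :=
  {la | Xor' (la.1 - unitVec la.2 ∈ P) (la.1 ∈ P)}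

/-- The image of a unit cube (given by its minimal corner) under `v ↦ g.act v + t`. -/
def cubeImage (g : SignedPerm) (t : Vec3) (c : Vec3) : Vec3 :=
  fun i => min (g.act c i + t i) (g.act (c + fun _ => (1 : ℤ)) i + t i)

/-- The polycube has a plane of mirror symmetry: an affine involution whose linear part
is a signed permutation of determinant `-1` and trace `1` (a plane reflection) maps the
polycube onto itself. -/
def MirrorSymmetric (P : Finset Vec3) : Prop :=
  ∃ g t, SignedPerm.det g = -1 ∧ SignedPerm.trace g = 1 ∧
    (∀ v, g.act (g.act v + t) + t = v) ∧
    ∀ c, c ∈ P ↔ cubeImage g t c ∈ P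

/-- A corner of the `2 × 2 × 2` block of cubes around a lattice point. -/
abbrev Corner := Fin 3 → Bool

/-- Action of a signed permutation on corners of the `2 × 2 × 2` block. -/
def SignedPerm.actB (g : SignedPerm) (δ : Corner) : Corner :=
  fun i => xor (g.sgn i) (δ (g.perm.symm i))

def cornerVec (δ : Corner) : Vec3 := fun i => if δ i then 1 else 0

/-- The local pattern of the polycube `P` at the lattice point `v`: which of the eight
cubes of the `2 × 2 × 2` block around `v` belong to `P`. -/
def localPattern (P : Finset Vec3) (v : Vec3) : Set Corner :=
  {δ | v - (fun _ => (1 : ℤ)) + cornerVec δ ∈ P}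

/-- The pattern of two cubes sharing exactly one edge (vertex type 3). -/
def edgePairPattern : Set Corner :=
  {δ | (∀ i, δ i = false) ∨ (δ 0 = true ∧ δ 1 = true ∧ δ 2 = false)}

/-- A reconfigurable vertex of a polycube: the local `2 × 2 × 2` pattern is, up to a
symmetry of the cube, the edge-sharing pair of cubes (type 3) or its complement
(type 7); these are the vertices whose six incident surface tiles are joined in a loop
entirely by flexible bonds. -/
def ReconfigurableVertex (P : Finset Vec3) (v : Vec3) : Prop :=
  ∃ g : SignedPerm,
    (∀ δ : Corner, δ ∈ localPattern P v ↔ SignedPerm.actB g δ ∈ edgePairPattern) ∨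
    (∀ δ : Corner, δ ∈ localPattern P v ↔ SignedPerm.actB g δ ∉ edgePairPattern)

/-- An edge location: a unit lattice segment from `s.1` to `s.1 + unitVec s.2`. -/
abbrev EdgeLoc := Vec3 × Fin 3

/-- The four boundary edge segments of a tile location. -/
def sidesOfTile (la : TileLoc) : Finset EdgeLoc :=
  {(la.1, la.2 + 1), (la.1 + unitVec (la.2 + 2), la.2 + 1),
   (la.1, la.2 + 2), (la.1 + unitVec (la.2 + 1), la.2 + 2)}

/-- The outline tiles incident to an edge segment. -/
def incidentTiles (P : Finset Vec3) (s : EdgeLoc) : Set TileLoc :=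
  {la | la ∈ outline P ∧ s ∈ sidesOfTile la}

/-- A crease edge (an edge of the polycube): an edge of the outline at which the
surface is not flat (not exactly two incident coplanar outline tiles). -/
def CreaseEdge (P : Finset Vec3) (s : EdgeLoc) : Prop :=
  (incidentTiles P s).Nonempty ∧
    ¬ ∃ la la' : TileLoc, la ≠ la' ∧ incidentTiles P s = {la, la'} ∧ la.2 = la'.2

def edgeEndpoints (s : EdgeLoc) : Set Vec3 := {s.1, s.1 + unitVec s.2}

def edgesAdjacent (s s' : EdgeLoc) : Prop :=
  ∃ v, v ∈ edgeEndpoints s ∧ v ∈ edgeEndpoints s'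

/-- The edges of a polycube are all connected: any two crease edges are joined by a
chain of crease edges sharing endpoints. -/
def EdgesConnected (P : Finset Vec3) : Prop :=
  ∀ s, CreaseEdge P s → ∀ s', CreaseEdge P s' →
    Relation.ReflTransGen
      (fun a b => edgesAdjacent a b ∧ CreaseEdge P a ∧ CreaseEdge P b) s s'

/-- The system deterministically assembles the shape `s`: it has a terminal assembly
and every embedding of every valid configuration of every terminal assembly has shape
`s` (up to translation and rotation). -/
def DeterministicallyAssembles (S : FTAMSystem) (s : Set TileLoc) : Prop :=
  (∃ α, TerminalAsm S α) ∧
    ∀ α, TerminalAsm S α → ∀ c e, Realizes α c e → CongruentShapes (shapeOf e) s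

/-! ### Complexity-theoretic notions -/

instance : Encodable (FTAMSystem × Assembly) := inferInstance
instance : Primcodable FTAMSystem := inferInstance


/-- A function `ℕ → ℕ` computable in polynomial time by a two-stack Turing machine
(with respect to binary encodings). -/
def PolyTimeFun (f : ℕ → ℕ) : Prop :=
  Nonempty (Turing.TM2ComputableInPolyTime Computability.encodingNatBool.encode
    Computability.encodingNatBool.encode f)

/-- A Boolean predicate on `ℕ` computable in polynomial time. -/
def PolyTimePred (f : ℕ → Bool) : Prop :=
  Nonempty (Turing.TM2ComputableInPolyTime Computability.encodingNatBool.encode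
    Computability.encodingBoolBool.encode f)

/-- A language over `ℕ` is in NP: some polynomial-time verifier accepts exactly the
members, given a certificate of polynomially bounded size. -/
def InNP (L : ℕ → Prop) : Prop :=
  ∃ (V : ℕ → Bool) (p : Polynomial ℕ), PolyTimePred V ∧
    ∀ x, L x ↔ ∃ w, Nat.size w ≤ p.eval (Nat.size x) ∧ V (Nat.pair x w) = true

/-- NP-hardness under polynomial-time many-one reductions. -/
def NPHard (L : ℕ → Prop) : Prop :=
  ∀ L', InNP L' → ∃ f : ℕ → ℕ, PolyTimeFun f ∧ ∀ x, L' x ↔ L (f x)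

/-- A language is co-NP-complete if its complement is in NP and its complement is
NP-hard. -/
def CoNPComplete (L : ℕ → Prop) : Prop :=
  InNP (fun x => ¬ L x) ∧ NPHard (fun x => ¬ L x)

/-- The Rigidity-from-assembly problem, as a language over `ℕ` via the canonical
encoding (inputs that encode a pair of a system and a producible assembly are
yes-instances exactly when the assembly is rigid). -/
def RigidityFromAssembly (n : ℕ) : Prop :=
  ∀ (S : FTAMSystem) (α : Assembly),
    Encodable.encode (S, α) = n → Producible S α → Rigid α

/-- The Terminality-from-assembly problem, as a language over `ℕ`. -/
def TerminalityFromAssembly (n : ℕ) : Prop :=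
  ∀ (S : FTAMSystem) (α : Assembly),
    Encodable.encode (S, α) = n → Producible S α → Terminal S α

/-! ### 3SAT -/

/-- A literal: a variable index and a polarity. -/
abbrev Lit := ℕ × Bool

/-- A clause with three literals. -/
abbrev Clause3 := Lit × Lit × Lit

/-- A Boolean formula in 3CNF. -/
abbrev CNF3 := List Clause3

def litVal (v : ℕ → Bool) (l : Lit) : Bool := if l.2 then v l.1 else ! v l.1

/-- Satisfiability of a 3CNF formula. -/
def Sat3 (φ : CNF3) : Prop :=
  ∃ v : ℕ → Bool, ∀ cl ∈ φ,
    litVal v cl.1 = true ∨ litVal v cl.2.1 = true ∨ litVal v cl.2.2 = true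


/-- The four lattice corners of a placed tile. -/
def placementCorners (p : Placement) : Finset Vec3 :=
  {p.1, p.1 + unitVec (normalAxis p + 1), p.1 + unitVec (normalAxis p + 2),
   p.1 + unitVec (normalAxis p + 1) + unitVec (normalAxis p + 2)}

/-- The solid `n × n × n` cube as a polycube. -/
def cubeP (n : ℕ) : Finset Vec3 :=
  ((Finset.range n) ×ˢ (Finset.range n) ×ˢ (Finset.range n)).image
    fun x => ![(x.1 : ℤ), (x.2.1 : ℤ), (x.2.2 : ℤ)]


/-- Mirror (point-reflect) a placement through the origin, keeping its normal. -/
def mirror (p : Placement) : Placement :=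
  (-p.1 - unitVec (normalAxis p + 1) - unitVec (normalAxis p + 2),
    p.2.1, (p.2.2.1, !p.2.2.2))

lemma normalVec_mirror (p : Placement) : normalVec (mirror p) = normalVec p := rfl

lemma center2_mirror (p : Placement) : center2 (mirror p) = -center2 p := by
  funext i
  simp [center2, mirror, normalAxis, Pi.smul_apply, smul_eq_mul]
  ring

lemma dirVec_flip (d : Dir) : dirVec (d.1, !d.2) = -dirVec d := by
  funext j; cases hd : d.2 <;> simp [dirVec, hd]

lemma cross_neg_left (u v : Vec3) : cross (-u) v = -cross u v := by
  funext i; simp [cross]; ring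

lemma sideDir_mirror (p : Placement) (s : Side) : sideDir (mirror p) s = -sideDir p s := by
  have h : dirVec (mirror p).2.2 = -dirVec p.2.2 := dirVec_flip p.2.2
  have hn : normalVec (mirror p) = normalVec p := rfl
  unfold sideDir
  rw [h, hn]
  split_ifs <;> simp [cross_neg_left]

lemma sideMid_mirror (p : Placement) (s : Side) : sideMid (mirror p) s = -sideMid p s := by
  rw [sideMid, sideMid, center2_mirror, sideDir_mirror, neg_add]

lemma sideAxis_mirror (p : Placement) (s : Side) : sideAxis (mirror p) s = -sideAxis p s := by
  simp [sideAxis, sideDir_mirror, cross_neg_left, normalVec_mirror]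

lemma overlap_mirror {p q : Placement} (h : overlap (mirror p) (mirror q)) : overlap p q := by
  obtain ⟨h1, h2⟩ := h
  have h2' : normalAxis p = normalAxis q := h2
  refine ⟨?_, h2'⟩
  have h1' : -p.1 - unitVec (normalAxis p + 1) - unitVec (normalAxis p + 2)
      = -q.1 - unitVec (normalAxis q + 1) - unitVec (normalAxis q + 2) := h1
  rw [h2'] at h1'
  linear_combination -h1'

lemma invertOr_straight : invertOr Orientation.straight = Orientation.straight := by decide

lemma invertOr_eq_straight {o : Orientation} :
    invertOr o = Orientation.straight ↔ o = Orientation.straight := by revert o; decide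

lemma chiralCfg_getD (c : Configuration) (k : ℕ) :
    (chiralCfg c).getD k Orientation.straight = invertOr (c.getD k Orientation.straight) := by
  simp only [chiralCfg, List.getD_eq_getElem?_getD, List.getElem?_map]
  rcases Nat.lt_or_ge k c.length with hk | hk
  · rw [List.getElem?_eq_getElem hk]; simp
  · rw [List.getElem?_eq_none hk]; simp [invertOr_straight]

lemma getD_map_mirror (e : List Placement) (i : ℕ) (h : i < e.length) :
    (e.map mirror).getD i default = mirror (e.getD i default) := by
  simp [List.getD_eq_getElem?_getD, List.getElem?_map, List.getElem?_eq_getElem h]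

lemma getD_mem_bonds (l : List BondSpec) (k : ℕ) (hk : k < l.length) :
    l.getD k default ∈ l := by
  rw [List.getD_eq_getElem?_getD, List.getElem?_eq_getElem hk]
  simpa using List.getElem_mem hk

lemma orientedBond_mirror {p q : Placement} {s s' : Side} {θ : Orientation}
    (h : orientedBond p s q s' θ) :
    orientedBond (mirror p) s (mirror q) s' (invertOr θ) := by
  obtain ⟨hadj, hor⟩ := h
  refine ⟨⟨?_, ?_⟩, ?_⟩
  · rw [sideMid_mirror, sideMid_mirror, hadj.1]
  · rcases hadj.2 with h2 | h2
    · left; rw [sideAxis_mirror, sideAxis_mirror, h2]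
    · right; rw [sideAxis_mirror, sideAxis_mirror, h2, neg_neg]
  · fin_cases θ
    · rw [if_neg (by decide), if_neg (by decide)]
      rw [if_neg (by decide), if_pos (by decide)] at hor
      obtain ⟨t, t', ht, ht', heq⟩ := hor
      refine ⟨t, t', ht, ht', ?_⟩
      rw [center2_mirror, center2_mirror, normalVec_mirror, normalVec_mirror]
      linear_combination -heq
    · rw [if_neg (by decide), if_neg (by decide)] at hor
      rw [if_neg (by decide), if_pos (by decide)]
      obtain ⟨t, t', ht, ht', heq⟩ := hor
      refine ⟨t, t', ht, ht', ?_⟩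
      rw [center2_mirror, center2_mirror, normalVec_mirror, normalVec_mirror]
      linear_combination -heq
    · rw [if_pos (by decide)]
      rw [if_pos (by decide)] at hor
      rw [normalVec_mirror, normalVec_mirror]
      exact hor

lemma realizes_mirror {α : Assembly} {c : Configuration} {e : Embedding}
    (h : Realizes α c e) : Realizes α (chiralCfg c) (e.map mirror) := by
  obtain ⟨hwf, hlen, hclen, hok, hov, hbond, hrig, hmid⟩ := h
  have hb : ∀ k, k < α.2.length → (α.2.getD k default).1.1 < e.length ∧
      (α.2.getD k default).2.1 < e.length := by
    intro k hk
    have hm := getD_mem_bonds α.2 k hk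
    have := hwf.1 _ hm
    omega
  refine ⟨hwf, by simpa using hlen, by simpa [chiralCfg] using hclen, ?_, ?_, ?_, ?_, ?_⟩
  · intro p hp
    obtain ⟨q, hq, rfl⟩ := List.mem_map.mp hp
    exact hok q hq
  · intro i j hi hj hij hcon
    rw [List.length_map] at hi hj
    rw [getD_map_mirror _ _ hi, getD_map_mirror _ _ hj] at hcon
    exact hov i j hi hj hij (overlap_mirror hcon)
  · intro k hk
    obtain ⟨h1, h2⟩ := hb k hk
    rw [getD_map_mirror _ _ h1, getD_map_mirror _ _ h2, chiralCfg_getD]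
    exact orientedBond_mirror (hbond k hk)
  · intro k hk hflex
    rw [chiralCfg_getD, invertOr_eq_straight]
    exact hrig k hk hflex
  · intro k k' hk hk' hne hs hs'
    rw [chiralCfg_getD, invertOr_eq_straight] at hs hs'
    rw [getD_map_mirror _ _ (hb k hk).1, getD_map_mirror _ _ (hb k' hk').1,
      sideMid_mirror, sideMid_mirror]
    exact fun hcon => hmid k k' hk hk' hne hs hs' (neg_injective hcon)


/-- Every frontier location `f` of an assembly `α` in a valid
configuration `c` has a corresponding frontier location (with the same tile type) in
the chiral configuration of `c`, such that attaching at `f` in `c` produces the same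
assembly as attaching at the corresponding location in the chiral configuration, the
two resulting configurations being chiral to each other. -/
theorem chiral_frontier_correspondence
    (S : FTAMSystem) (α : Assembly) (c : Configuration) (f : FrontierLoc)
    (hc : ValidConfig α c) (hf : IsFrontier S α c f) :
    IsFrontier S α (chiralCfg c) (chiralFrontier f) ∧
    (chiralFrontier f).1 = f.1 ∧
    attachAsm α (chiralFrontier f) = attachAsm α f ∧
    attachCfg (chiralCfg c) (chiralFrontier f) = chiralCfg (attachCfg c f) := by
  obtain ⟨hmem, hne, hnd, hlt, hstr, e, p, hre, hpok, hnov, hatt⟩ := hf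
  refine ⟨⟨hmem, ?_, ?_, ?_, ?_, e.map mirror, mirror p, realizes_mirror hre, hpok, ?_, ?_⟩,
    rfl, ?_, ?_⟩
  · simp only [chiralFrontier, ne_eq, List.map_eq_nil_iff]
    exact hne
  · simpa [chiralFrontier, List.map_map, Function.comp_def] using hnd
  · intro a ha
    obtain ⟨b, hb, rfl⟩ := List.mem_map.mp ha
    exact hlt b hb
  · simpa [chiralFrontier, List.map_map, Function.comp_def] using hstr
  · intro q hq
    obtain ⟨r, hr, rfl⟩ := List.mem_map.mp hq
    exact fun hcon => hnov r hr (overlap_mirror hcon)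
  · intro a ha
    obtain ⟨b, hb, rfl⟩ := List.mem_map.mp ha
    obtain ⟨hg, hrg, hob⟩ := hatt b hb
    refine ⟨hg, fun hfl => invertOr_eq_straight.mpr (hrg hfl), ?_⟩
    have hblt : b.2.1 < e.length := hre.2.1 ▸ hlt b hb
    rw [getD_map_mirror _ _ hblt]
    exact orientedBond_mirror hob
  · simp [attachAsm, chiralFrontier, List.map_map, Function.comp_def]
  · simp [attachCfg, chiralCfg, chiralFrontier, List.map_map, List.map_append,
      Function.comp_def]

end FTAM
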